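/- The function H satisfies H(r) → 0 as r → 0⁺ and H(r) → 1 as r → 1⁻; in particular, setting H(0) = 0 and H(1) = 1 makes H continuous on [0,1]. -/

import Mathlib

open Real Set Filter
open MeasureTheory intervalIntegral Topology

/-- Complete elliptic integral of the first kind. -/
noncomputable def K (r : ℝ) : ℝ :=
  ∫ θ in (0:ℝ)..(π/2), 1 / Real.sqrt (1 - r^2 * Real.sin θ ^ 2)

/-- Complete elliptic integral of the second kind. -/
noncomputable def E (r : ℝ) : ℝ :=
  ∫ θ in (0:ℝ)..(π/2), Real.sqrt (1 - r^2 * Real.sin θ ^ 2)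

/-- Complementary complete elliptic integral of the first kind: `K'(r) = K(√(1-r²))`. -/
noncomputable def K' (r : ℝ) : ℝ := K (Real.sqrt (1 - r^2))

/-- Complementary complete elliptic integral of the second kind: `E'(r) = E(√(1-r²))`. -/
noncomputable def E' (r : ℝ) : ℝ := E (Real.sqrt (1 - r^2))

/-- The special function `m(r) = (2/π) r'² K(r) K'(r)` (here `r'² = 1 - r²`). -/
noncomputable def m (r : ℝ) : ℝ := (2/π) * (1 - r^2) * K r * K' r

/-- The function `H` from Remark 2.4. -/
noncomputable def H (r : ℝ) : ℝ :=
  (1 / (1 + π * m r / (4 * E' r * K r - π))) *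
    (1 + 8 * (K r * K' r * (E r * E' r + r^2 * K r * K' r - K r * E' r) /
      (4 * E' r * K r - π)^2))

/-- The extension of `H` to `[0,1]` with `H(0) = 0` and `H(1) = 1`. -/
noncomputable def Hext (r : ℝ) : ℝ :=
  if r = 0 then 0 else if r = 1 then 1 else H r

-- basic positivity of the integrand's radicand
lemma radicand_pos {r : ℝ} (hr : r^2 < 1) (θ : ℝ) : 0 < 1 - r^2 * Real.sin θ ^ 2 := by
  nlinarith [Real.sin_sq_le_one θ, sq_nonneg r, sq_nonneg (Real.sin θ)]

lemma radicand_le_one {r : ℝ} (θ : ℝ) : 1 - r^2 * Real.sin θ ^ 2 ≤ 1 := by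
  nlinarith [sq_nonneg r, sq_nonneg (Real.sin θ)]

lemma contK {r : ℝ} (hr : r^2 < 1) :
    Continuous fun θ => 1 / Real.sqrt (1 - r^2 * Real.sin θ ^ 2) := by
  apply Continuous.div continuous_const
  · exact (continuous_const.sub (continuous_const.mul (Real.continuous_sin.pow 2))).sqrt
  · intro θ
    exact (Real.sqrt_pos.mpr (radicand_pos hr θ)).ne'

lemma contE (r : ℝ) : Continuous fun θ => Real.sqrt (1 - r^2 * Real.sin θ ^ 2) :=
  (continuous_const.sub (continuous_const.mul (Real.continuous_sin.pow 2))).sqrt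

lemma intgK {r : ℝ} (hr : r^2 < 1) :
    IntervalIntegrable (fun θ => 1 / Real.sqrt (1 - r^2 * Real.sin θ ^ 2)) volume 0 (π/2) :=
  (contK hr).intervalIntegrable _ _

lemma intgE (r : ℝ) :
    IntervalIntegrable (fun θ => Real.sqrt (1 - r^2 * Real.sin θ ^ 2)) volume 0 (π/2) :=
  (contE r).intervalIntegrable _ _

lemma K_ge {r : ℝ} (hr : r^2 < 1) : π/2 ≤ K r := by
  have h : ∫ θ in (0:ℝ)..(π/2), (1:ℝ) ≤ K r := by
    apply integral_mono_on (le_of_lt (by positivity)) (intervalIntegrable_const) (intgK hr)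
    intro θ _
    rw [le_div_iff₀ (Real.sqrt_pos.mpr (radicand_pos hr θ)), one_mul]
    calc Real.sqrt (1 - r^2 * Real.sin θ ^ 2) ≤ Real.sqrt 1 :=
          Real.sqrt_le_sqrt (radicand_le_one θ)
      _ = 1 := Real.sqrt_one
  simpa using h

lemma K_le_crude {r : ℝ} (hr : r^2 < 1) : K r ≤ (π/2) / Real.sqrt (1 - r^2) := by
  have h : K r ≤ ∫ θ in (0:ℝ)..(π/2), 1 / Real.sqrt (1 - r^2) := by
    apply integral_mono_on (le_of_lt (by positivity)) (intgK hr) intervalIntegrable_const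
    intro θ _
    apply one_div_le_one_div_of_le (Real.sqrt_pos.mpr (by linarith))
    apply Real.sqrt_le_sqrt
    nlinarith [Real.sin_sq_le_one θ, sq_nonneg r]
  simpa [div_eq_mul_inv, mul_comm] using h

lemma E_le (r : ℝ) : E r ≤ π/2 := by
  have h : E r ≤ ∫ θ in (0:ℝ)..(π/2), (1:ℝ) := by
    apply integral_mono_on (le_of_lt (by positivity)) (intgE r) intervalIntegrable_const
    intro θ _
    calc Real.sqrt (1 - r^2 * Real.sin θ ^ 2) ≤ Real.sqrt 1 :=
          Real.sqrt_le_sqrt (radicand_le_one θ)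
      _ = 1 := Real.sqrt_one
  simpa using h

lemma E_ge_sqrt {r : ℝ} (hr : r^2 ≤ 1) : Real.sqrt (1 - r^2) * (π/2) ≤ E r := by
  have h : ∫ θ in (0:ℝ)..(π/2), Real.sqrt (1 - r^2) ≤ E r := by
    apply integral_mono_on (le_of_lt (by positivity)) intervalIntegrable_const (intgE r)
    intro θ _
    apply Real.sqrt_le_sqrt
    nlinarith [Real.sin_sq_le_one θ, sq_nonneg r]
  simpa [mul_comm] using h

lemma E_ge_one {r : ℝ} (hr : r^2 ≤ 1) : 1 ≤ E r := by
  have h : ∫ θ in (0:ℝ)..(π/2), Real.cos θ ≤ E r := by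
    apply integral_mono_on (le_of_lt (by positivity))
      (Real.continuous_cos.intervalIntegrable _ _) (intgE r)
    intro θ hθ
    have hc : 0 ≤ Real.cos θ :=
      Real.cos_nonneg_of_mem_Icc ⟨by linarith [Real.pi_pos, hθ.1], hθ.2⟩
    have : Real.cos θ ^ 2 ≤ 1 - r^2 * Real.sin θ ^ 2 := by
      nlinarith [Real.sin_sq_add_cos_sq θ, sq_nonneg (Real.sin θ)]
    calc Real.cos θ = Real.sqrt (Real.cos θ ^ 2) := (Real.sqrt_sq hc).symm
      _ ≤ _ := Real.sqrt_le_sqrt this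
  simpa using h

lemma sqrt_add_le (x y : ℝ) (hx : 0 ≤ x) (hy : 0 ≤ y) :
    Real.sqrt (x + y) ≤ Real.sqrt x + Real.sqrt y := by
  rw [show Real.sqrt x + Real.sqrt y = Real.sqrt ((Real.sqrt x + Real.sqrt y)^2) by
    rw [Real.sqrt_sq (by positivity)]]
  apply Real.sqrt_le_sqrt
  nlinarith [Real.sq_sqrt hx, Real.sq_sqrt hy, Real.sqrt_nonneg x, Real.sqrt_nonneg y]

lemma E_le_one_add {r : ℝ} (hr : r^2 ≤ 1) : E r ≤ 1 + (π/2) * Real.sqrt (1 - r^2) := by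
  have h : E r ≤ ∫ θ in (0:ℝ)..(π/2), (Real.cos θ + Real.sqrt (1 - r^2)) := by
    apply integral_mono_on (le_of_lt (by positivity)) (intgE r)
      ((Real.continuous_cos.add continuous_const).intervalIntegrable _ _)
    intro θ hθ
    have hc : 0 ≤ Real.cos θ :=
      Real.cos_nonneg_of_mem_Icc ⟨by linarith [Real.pi_pos, hθ.1], hθ.2⟩
    have hid : 1 - r^2 * Real.sin θ ^ 2 = Real.cos θ ^ 2 + (1 - r^2) * Real.sin θ ^ 2 := by
      nlinarith [Real.sin_sq_add_cos_sq θ]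
    rw [hid]
    calc Real.sqrt (Real.cos θ ^ 2 + (1 - r^2) * Real.sin θ ^ 2)
        ≤ Real.sqrt (Real.cos θ ^ 2) + Real.sqrt ((1 - r^2) * Real.sin θ ^ 2) :=
          sqrt_add_le _ _ (sq_nonneg _) (by nlinarith [sq_nonneg (Real.sin θ)])
      _ ≤ Real.cos θ + Real.sqrt (1 - r^2) := by
          gcongr
          · rw [Real.sqrt_sq hc]
          · nlinarith [Real.sin_sq_le_one θ]
  have hint : ∫ θ in (0:ℝ)..(π/2), (Real.cos θ + Real.sqrt (1 - r^2))
      = 1 + (π/2) * Real.sqrt (1 - r^2) := by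
    rw [integral_add (Real.continuous_cos.intervalIntegrable _ _) intervalIntegrable_const]
    simp [integral_cos]
  linarith [h, hint.le, hint.ge]

lemma K_sub_E_le {r : ℝ} (hr : r^2 ≤ 1/2) : K r - E r ≤ 4 * r^2 := by
  have hr1 : r^2 < 1 := by linarith
  have h : K r - E r = ∫ θ in (0:ℝ)..(π/2),
      (1 / Real.sqrt (1 - r^2 * Real.sin θ ^ 2) - Real.sqrt (1 - r^2 * Real.sin θ ^ 2)) := by
    rw [integral_sub (intgK hr1) (intgE r)]; rfl
  have h2 : ∫ θ in (0:ℝ)..(π/2),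
      (1 / Real.sqrt (1 - r^2 * Real.sin θ ^ 2) - Real.sqrt (1 - r^2 * Real.sin θ ^ 2))
      ≤ ∫ θ in (0:ℝ)..(π/2), (2 * r^2 : ℝ) := by
    apply integral_mono_on (le_of_lt (by positivity))
      ((intgK hr1).sub (intgE r)) intervalIntegrable_const
    intro θ _
    set u := 1 - r^2 * Real.sin θ ^ 2 with hu
    have hupos : 0 < u := radicand_pos hr1 θ
    have hs : 0 < Real.sqrt u := Real.sqrt_pos.mpr hupos
    have hss : Real.sqrt u * Real.sqrt u = u := Real.mul_self_sqrt hupos.le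
    have hle1 : Real.sqrt u ≤ 1 := by rw [show (1:ℝ) = Real.sqrt 1 from Real.sqrt_one.symm]; exact Real.sqrt_le_sqrt (radicand_le_one θ)
    have h1u : 1 - u ≤ r^2 := by
      have := Real.sin_sq_le_one θ
      nlinarith [sq_nonneg r]
    have huhalf : 1/2 ≤ u := by
      have := Real.sin_sq_le_one θ
      nlinarith [sq_nonneg r, sq_nonneg (Real.sin θ)]
    rw [sub_le_iff_le_add, div_le_iff₀ hs]
    nlinarith [sq_nonneg r]
  have h3 : ∫ θ in (0:ℝ)..(π/2), (2 * r^2 : ℝ) = π * r^2 := by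
    simp; ring
  have := Real.pi_le_four
  have h4 : π * r^2 ≤ 4 * r^2 := by nlinarith [sq_nonneg r]
  linarith [h.le, h.ge]

lemma int_one_div_linear {b : ℝ} (hb : 0 < b) (hb1 : b < 1) :
    ∫ θ in (0:ℝ)..(π/2), 1/(π/2 - (1-b)*θ) = (-Real.log b)/(1-b) := by
  have hpos : ∀ θ ∈ uIcc (0:ℝ) (π/2), 0 < π/2 - (1-b)*θ := by
    intro θ hθ
    rw [uIcc_of_le (by positivity)] at hθ
    nlinarith [hθ.1, hθ.2, Real.pi_pos]
  have hderiv : ∀ θ ∈ uIcc (0:ℝ) (π/2),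
      HasDerivAt (fun θ => -(1-b)⁻¹ * Real.log (π/2 - (1-b)*θ))
        (1/(π/2 - (1-b)*θ)) θ := by
    intro θ hθ
    have h1 : HasDerivAt (fun θ : ℝ => π/2 - (1-b)*θ) (-(1-b)) θ := by
      simpa using ((hasDerivAt_id θ).const_mul (1-b)).const_sub (π/2)
    have h2 := (h1.log (hpos θ hθ).ne')
    have h3 := h2.const_mul (-(1-b)⁻¹)
    have hbne : (1:ℝ) - b ≠ 0 := by linarith
    refine h3.congr_deriv ?_
    rw [show -(1-b)⁻¹ * (-(1-b) / (π/2-(1-b)*θ)) = ((1-b) * (1-b)⁻¹) / (π/2-(1-b)*θ) by ring,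
      mul_inv_cancel₀ hbne]
  have hcont : ContinuousOn (fun θ => 1/(π/2 - (1-b)*θ)) (uIcc (0:ℝ) (π/2)) := by
    apply ContinuousOn.div continuousOn_const
    · exact (continuousOn_const.sub (continuousOn_const.mul continuousOn_id))
    · intro θ hθ; exact (hpos θ hθ).ne'
  rw [integral_eq_sub_of_hasDerivAt hderiv (hcont.intervalIntegrable)]
  have hb2 : π/2 - (1-b)*(π/2) = b * (π/2) := by ring
  rw [hb2, Real.log_mul hb.ne' (by positivity), show π/2 - (1-b)*0 = π/2 by ring]
  field_simp
  ring

lemma int_one_div_shift {b : ℝ} (hb : 0 < b) :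
    ∫ θ in (0:ℝ)..(π/2), 1/(b + π/2 - θ) = Real.log (b + π/2) - Real.log b := by
  have hpos : ∀ θ ∈ uIcc (0:ℝ) (π/2), 0 < b + π/2 - θ := by
    intro θ hθ
    rw [uIcc_of_le (by positivity)] at hθ
    nlinarith [hθ.1, hθ.2, Real.pi_pos]
  have hderiv : ∀ θ ∈ uIcc (0:ℝ) (π/2),
      HasDerivAt (fun θ => -Real.log (b + π/2 - θ)) (1/(b + π/2 - θ)) θ := by
    intro θ hθ
    have h1 : HasDerivAt (fun θ : ℝ => b + π/2 - θ) (-1) θ := by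
      simpa using (hasDerivAt_id θ).const_sub (b + π/2)
    have h2 := (h1.log (hpos θ hθ).ne').neg
    refine h2.congr_deriv ?_
    field_simp
  have hcont : ContinuousOn (fun θ => 1/(b + π/2 - θ)) (uIcc (0:ℝ) (π/2)) := by
    apply ContinuousOn.div continuousOn_const
    · exact (continuousOn_const.sub continuousOn_id)
    · intro θ hθ; exact (hpos θ hθ).ne'
  rw [integral_eq_sub_of_hasDerivAt hderiv (hcont.intervalIntegrable)]
  simp
  ring

lemma sqrt_one_sub_mem {r : ℝ} (hr : r ∈ Ioo (0:ℝ) 1) :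
    Real.sqrt (1 - r^2) ∈ Ioo (0:ℝ) 1 := by
  constructor
  · apply Real.sqrt_pos.mpr; nlinarith [hr.1, hr.2]
  · calc Real.sqrt (1 - r^2) < Real.sqrt 1 :=
          Real.sqrt_lt_sqrt (by nlinarith [hr.1, hr.2]) (by nlinarith [hr.1, hr.2])
      _ = 1 := Real.sqrt_one

lemma sq_sqrt_one_sub {r : ℝ} (hr : r ∈ Ioo (0:ℝ) 1) :
    Real.sqrt (1 - r^2) ^ 2 = 1 - r^2 :=
  Real.sq_sqrt (by nlinarith [hr.1, hr.2])

lemma K_le_log {r : ℝ} (hr : r ∈ Ioo (0:ℝ) 1) :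
    K r ≤ Real.sqrt 2 * (π/2) * ((-Real.log (Real.sqrt (1 - r^2))) / (1 - Real.sqrt (1 - r^2))) := by
  set b := Real.sqrt (1 - r^2) with hbdef
  obtain ⟨hb0, hb1⟩ := sqrt_one_sub_mem hr
  have hb2 : b^2 = 1 - r^2 := sq_sqrt_one_sub hr
  have hr1 : r^2 < 1 := by nlinarith [hr.1, hr.2]
  have hpos : ∀ θ ∈ Icc (0:ℝ) (π/2), 0 < π/2 - (1-b)*θ := by
    intro θ hθ; nlinarith [hθ.1, hθ.2, Real.pi_pos]
  have hcont : ContinuousOn (fun θ => Real.sqrt 2 * (π/2) * (1/(π/2 - (1-b)*θ)))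
      (uIcc (0:ℝ) (π/2)) := by
    apply ContinuousOn.mul continuousOn_const
    apply ContinuousOn.div continuousOn_const
    · exact (continuousOn_const.sub (continuousOn_const.mul continuousOn_id))
    · intro θ hθ
      rw [uIcc_of_le (by positivity)] at hθ
      exact (hpos θ hθ).ne'
  have hmono : K r ≤ ∫ θ in (0:ℝ)..(π/2), Real.sqrt 2 * (π/2) * (1/(π/2 - (1-b)*θ)) := by
    apply integral_mono_on (by positivity) (intgK hr1) hcont.intervalIntegrable
    intro θ hθ
    have hsin : 2/π * θ ≤ Real.sin θ := Real.mul_le_sin hθ.1 hθ.2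
    have hcos : 1 - 2/π * θ ≤ Real.cos θ := Real.one_sub_mul_le_cos hθ.1 hθ.2
    have hsin0 : 0 ≤ Real.sin θ := Real.sin_nonneg_of_nonneg_of_le_pi hθ.1 (by
      linarith [hθ.2, Real.pi_pos])
    have hcos0 : 0 ≤ Real.cos θ :=
      Real.cos_nonneg_of_mem_Icc ⟨by linarith [Real.pi_pos, hθ.1], hθ.2⟩
    set c := Real.cos θ + b * Real.sin θ with hc
    have hd := hpos θ hθ
    have hπ := Real.pi_pos
    have hcge : 2/π * (π/2 - (1-b)*θ) ≤ c := by
      have h1 : 2/π * (π/2 - (1-b)*θ) = (1 - 2/π*θ) + b * (2/π*θ) := by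
        field_simp; ring
      rw [h1]
      have hbs := mul_le_mul_of_nonneg_left hsin hb0.le
      linarith
    have hcpos : 0 < c := lt_of_lt_of_le (by positivity) hcge
    have hrad : 1 - r^2 * Real.sin θ ^ 2 = Real.cos θ ^ 2 + b^2 * Real.sin θ ^ 2 := by
      rw [hb2]; nlinarith [Real.sin_sq_add_cos_sq θ]
    have hradpos := radicand_pos hr1 θ
    have hcsq : c^2 ≤ 2 * (1 - r^2 * Real.sin θ ^ 2) := by
      rw [hrad]; nlinarith [sq_nonneg (Real.cos θ - b * Real.sin θ)]
    have hsq : c ≤ Real.sqrt 2 * Real.sqrt (1 - r^2 * Real.sin θ ^ 2) := by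
      calc c = Real.sqrt (c^2) := (Real.sqrt_sq hcpos.le).symm
        _ ≤ Real.sqrt (2 * (1 - r^2 * Real.sin θ ^ 2)) := Real.sqrt_le_sqrt hcsq
        _ = _ := Real.sqrt_mul (by norm_num) _
    have hsqrtpos : 0 < Real.sqrt (1 - r^2 * Real.sin θ ^ 2) := Real.sqrt_pos.mpr hradpos
    have step1 : 1 / Real.sqrt (1 - r^2 * Real.sin θ ^ 2) ≤ Real.sqrt 2 / c := by
      rw [div_le_div_iff₀ hsqrtpos hcpos]
      nlinarith [Real.sqrt_nonneg (2:ℝ)]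
    have h5 : 1 ≤ (π/2) * (1/(π/2 - (1-b)*θ)) * c := by
      calc (1:ℝ) = (π/2) * (1/(π/2 - (1-b)*θ)) * (2/π * (π/2 - (1-b)*θ)) := by
            field_simp
            rw [div_self (by nlinarith : (π - 2 * (1 - b) * θ) ≠ 0)]
        _ ≤ (π/2) * (1/(π/2 - (1-b)*θ)) * c :=
            mul_le_mul_of_nonneg_left hcge (by positivity)
    have step2 : Real.sqrt 2 / c ≤ Real.sqrt 2 * (π/2) * (1/(π/2 - (1-b)*θ)) := by
      rw [div_le_iff₀ hcpos]
      calc Real.sqrt 2 = Real.sqrt 2 * 1 := (mul_one _).symm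
        _ ≤ Real.sqrt 2 * ((π/2) * (1/(π/2 - (1-b)*θ)) * c) :=
            mul_le_mul_of_nonneg_left h5 (Real.sqrt_nonneg 2)
        _ = Real.sqrt 2 * (π/2) * (1/(π/2 - (1-b)*θ)) * c := by ring
    linarith
  rw [intervalIntegral.integral_const_mul, int_one_div_linear hb0 hb1] at hmono
  linarith [hmono]

lemma K_ge_log {r : ℝ} (hr : r ∈ Ioo (0:ℝ) 1) :
    Real.log (Real.sqrt (1 - r^2) + π/2) - Real.log (Real.sqrt (1 - r^2)) ≤ K r := by
  set b := Real.sqrt (1 - r^2) with hbdef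
  obtain ⟨hb0, hb1⟩ := sqrt_one_sub_mem hr
  have hb2 : b^2 = 1 - r^2 := sq_sqrt_one_sub hr
  have hr1 : r^2 < 1 := by nlinarith [hr.1, hr.2]
  have hpos : ∀ θ ∈ Icc (0:ℝ) (π/2), 0 < b + π/2 - θ := by
    intro θ hθ; nlinarith [hθ.1, hθ.2, Real.pi_pos]
  have hcont : ContinuousOn (fun θ => 1/(b + π/2 - θ)) (uIcc (0:ℝ) (π/2)) := by
    apply ContinuousOn.div continuousOn_const
    · exact (continuousOn_const.sub continuousOn_id)
    · intro θ hθ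
      rw [uIcc_of_le (by positivity)] at hθ
      exact (hpos θ hθ).ne'
  have hmono : ∫ θ in (0:ℝ)..(π/2), 1/(b + π/2 - θ) ≤ K r := by
    apply integral_mono_on (by positivity) hcont.intervalIntegrable (intgK hr1)
    intro θ hθ
    have hsin1 : Real.sin θ ≤ 1 := Real.sin_le_one θ
    have hsin0 : 0 ≤ Real.sin θ := Real.sin_nonneg_of_nonneg_of_le_pi hθ.1 (by
      linarith [hθ.2, Real.pi_pos])
    have hcos0 : 0 ≤ Real.cos θ :=
      Real.cos_nonneg_of_mem_Icc ⟨by linarith [Real.pi_pos, hθ.1], hθ.2⟩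
    have hcosle : Real.cos θ ≤ π/2 - θ := by
      rw [← Real.sin_pi_div_two_sub]
      exact Real.sin_le (by linarith [hθ.2])
    have hrad : 1 - r^2 * Real.sin θ ^ 2 = Real.cos θ ^ 2 + b^2 * Real.sin θ ^ 2 := by
      rw [hb2]; nlinarith [Real.sin_sq_add_cos_sq θ]
    have hradpos := radicand_pos hr1 θ
    have hub : Real.sqrt (1 - r^2 * Real.sin θ ^ 2) ≤ b + π/2 - θ := by
      have h1 : Real.sqrt (1 - r^2 * Real.sin θ ^ 2)
          ≤ Real.cos θ + b * Real.sin θ := by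
        rw [← Real.sqrt_sq (by positivity : (0:ℝ) ≤ Real.cos θ + b * Real.sin θ)]
        apply Real.sqrt_le_sqrt
        rw [hrad]
        nlinarith [mul_nonneg (mul_nonneg hb0.le hcos0) hsin0]
      have h2 : Real.cos θ + b * Real.sin θ ≤ (π/2 - θ) + b := by
        have hb' := mul_le_mul_of_nonneg_left hsin1 hb0.le
        have : b * Real.sin θ ≤ b := by linarith [mul_one b ▸ hb']
        linarith
      linarith
    apply one_div_le_one_div_of_le (Real.sqrt_pos.mpr hradpos) hub
  rw [int_one_div_shift hb0] at hmono
  exact hmono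

lemma radicand_cont (θ : ℝ) : Continuous fun r : ℝ => 1 - r^2 * Real.sin θ ^ 2 :=
  continuous_const.sub ((continuous_pow 2).mul continuous_const)

lemma Kcont : ContinuousOn K (Ioo (0:ℝ) 1) := by
  intro r₀ hr₀
  set c := (1 + r₀)/2 with hcdef
  have hc1 : c < 1 := by simp only [hcdef]; linarith [hr₀.2]
  have hrc : r₀ < c := by simp only [hcdef]; linarith [hr₀.1]
  have hc0 : 0 < c := by simp only [hcdef]; linarith [hr₀.1]
  have hcsq : c^2 < 1 := by nlinarith
  have hev : ∀ᶠ r in 𝓝[Ioo (0:ℝ) 1] r₀, r ∈ Ioo (0:ℝ) 1 ∩ Iio c :=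
    Filter.inter_mem self_mem_nhdsWithin
      (mem_nhdsWithin_of_mem_nhds (Iio_mem_nhds hrc))
  have key := intervalIntegral.tendsto_integral_filter_of_dominated_convergence
    (μ := volume) (a := (0:ℝ)) (b := π/2)
    (F := fun r θ => 1 / Real.sqrt (1 - r^2 * Real.sin θ ^ 2))
    (f := fun θ => 1 / Real.sqrt (1 - r₀^2 * Real.sin θ ^ 2))
    (l := 𝓝[Ioo (0:ℝ) 1] r₀)
    (bound := fun _ => 1 / Real.sqrt (1 - c^2))
    (hev.mono fun r hr => ((contK (by nlinarith [hr.1.1, hr.1.2] : r^2 < 1)).aestronglyMeasurable))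
    (hev.mono fun r hr => (ae_of_all _ fun θ _ => by
      have hr2 : r^2 ≤ c^2 := by
        nlinarith [mul_pos (sub_pos.mpr hr.2) (by linarith [hr.1.1] : (0:ℝ) < c + r)]
      have h1 : 1 - c^2 ≤ 1 - r^2 * Real.sin θ ^ 2 := by
        nlinarith [Real.sin_sq_le_one θ, sq_nonneg r]
      rw [Real.norm_eq_abs, abs_of_nonneg (by positivity)]
      exact one_div_le_one_div_of_le (Real.sqrt_pos.mpr (by nlinarith))
        (Real.sqrt_le_sqrt h1)))
    intervalIntegrable_const
    (ae_of_all _ fun θ _ => by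
      have hcc : ContinuousAt (fun r : ℝ => 1 / Real.sqrt (1 - r^2 * Real.sin θ ^ 2)) r₀ := by
        apply ContinuousAt.div continuousAt_const
          ((Real.continuous_sqrt.comp (radicand_cont θ)).continuousAt)
        exact (Real.sqrt_pos.mpr (radicand_pos (by nlinarith [hr₀.1, hr₀.2]) θ)).ne'
      exact hcc.tendsto.mono_left nhdsWithin_le_nhds)
  exact key

lemma Econt : ContinuousOn E (Ioo (0:ℝ) 1) := by
  intro r₀ hr₀
  have key := intervalIntegral.tendsto_integral_filter_of_dominated_convergence
    (μ := volume) (a := (0:ℝ)) (b := π/2)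
    (F := fun r θ => Real.sqrt (1 - r^2 * Real.sin θ ^ 2))
    (f := fun θ => Real.sqrt (1 - r₀^2 * Real.sin θ ^ 2))
    (l := 𝓝[Ioo (0:ℝ) 1] r₀)
    (bound := fun _ => (1:ℝ))
    (Filter.Eventually.of_forall fun r => (contE r).aestronglyMeasurable)
    (Filter.Eventually.of_forall fun r => (ae_of_all _ fun θ _ => by
      rw [Real.norm_eq_abs, abs_of_nonneg (Real.sqrt_nonneg _)]
      calc Real.sqrt (1 - r^2 * Real.sin θ ^ 2) ≤ Real.sqrt 1 :=
            Real.sqrt_le_sqrt (radicand_le_one θ)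
        _ = 1 := Real.sqrt_one))
    intervalIntegrable_const
    (ae_of_all _ fun θ _ => by
      have hcc : ContinuousAt (fun r : ℝ => Real.sqrt (1 - r^2 * Real.sin θ ^ 2)) r₀ :=
        (Real.continuous_sqrt.comp (radicand_cont θ)).continuousAt
      exact hcc.tendsto.mono_left nhdsWithin_le_nhds)
  exact key

lemma sq_lt_one_of_mem {r : ℝ} (hr : r ∈ Ioo (0:ℝ) 1) : r^2 < 1 := by
  nlinarith [hr.1, hr.2]

lemma sqrt_cont : Continuous fun r : ℝ => Real.sqrt (1 - r^2) :=
  (continuous_const.sub (continuous_pow 2)).sqrt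

lemma K_tendsto_zero : Tendsto K (𝓝[Ioo (0:ℝ) 1] 0) (𝓝 (π/2)) := by
  have hup : Tendsto (fun r : ℝ => (π/2) / Real.sqrt (1 - r^2)) (𝓝[Ioo (0:ℝ) 1] 0)
      (𝓝 (π/2)) := by
    have h : ContinuousAt (fun r : ℝ => (π/2) / Real.sqrt (1 - r^2)) 0 := by
      apply ContinuousAt.div continuousAt_const sqrt_cont.continuousAt
      norm_num
    have h2 := h.tendsto
    norm_num at h2
    exact h2.mono_left nhdsWithin_le_nhds
  apply tendsto_of_tendsto_of_tendsto_of_le_of_le' tendsto_const_nhds hup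
  · exact eventually_nhdsWithin_of_forall fun r hr => K_ge (sq_lt_one_of_mem hr)
  · exact eventually_nhdsWithin_of_forall fun r hr => K_le_crude (sq_lt_one_of_mem hr)

lemma E_tendsto_zero : Tendsto E (𝓝[Ioo (0:ℝ) 1] 0) (𝓝 (π/2)) := by
  have hlo : Tendsto (fun r : ℝ => Real.sqrt (1 - r^2) * (π/2)) (𝓝[Ioo (0:ℝ) 1] 0)
      (𝓝 (π/2)) := by
    have h := (sqrt_cont.continuousAt (x := (0:ℝ))).tendsto
    have h2 := h.mul (tendsto_const_nhds (x := π/2))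
    norm_num at h2
    exact h2.mono_left nhdsWithin_le_nhds
  apply tendsto_of_tendsto_of_tendsto_of_le_of_le' hlo tendsto_const_nhds
  · exact eventually_nhdsWithin_of_forall fun r hr => E_ge_sqrt (sq_lt_one_of_mem hr).le
  · exact eventually_nhdsWithin_of_forall fun r _ => E_le r

lemma E_tendsto_one : Tendsto E (𝓝[Ioo (0:ℝ) 1] 1) (𝓝 1) := by
  have hup : Tendsto (fun r : ℝ => 1 + (π/2) * Real.sqrt (1 - r^2)) (𝓝[Ioo (0:ℝ) 1] 1)
      (𝓝 1) := by
    have h := (sqrt_cont.continuousAt (x := (1:ℝ))).tendsto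
    have h2 := (tendsto_const_nhds (x := (1:ℝ))).add
      ((tendsto_const_nhds (x := π/2)).mul h)
    norm_num at h2
    exact h2.mono_left nhdsWithin_le_nhds
  apply tendsto_of_tendsto_of_tendsto_of_le_of_le' tendsto_const_nhds hup
  · exact eventually_nhdsWithin_of_forall fun r hr => E_ge_one (sq_lt_one_of_mem hr).le
  · exact eventually_nhdsWithin_of_forall fun r hr => E_le_one_add (sq_lt_one_of_mem hr).le

lemma sqrt_tendsto_one : Tendsto (fun r : ℝ => Real.sqrt (1 - r^2)) (𝓝[Ioo (0:ℝ) 1] 1)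
    (𝓝[Ioi 0] 0) := by
  apply tendsto_nhdsWithin_of_tendsto_nhds_of_eventually_within
  · have h := (sqrt_cont.continuousAt (x := (1:ℝ))).tendsto
    norm_num at h
    exact h.mono_left nhdsWithin_le_nhds
  · exact eventually_nhdsWithin_of_forall fun r hr => (sqrt_one_sub_mem hr).1

lemma K_tendsto_atTop : Tendsto K (𝓝[Ioo (0:ℝ) 1] 1) atTop := by
  have hlog : Tendsto (fun r : ℝ => Real.log (Real.sqrt (1 - r^2))) (𝓝[Ioo (0:ℝ) 1] 1)
      atBot := Real.tendsto_log_nhdsGT_zero.comp sqrt_tendsto_one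
  have hneg : Tendsto (fun r : ℝ => Real.log (π/2) - Real.log (Real.sqrt (1 - r^2)))
      (𝓝[Ioo (0:ℝ) 1] 1) atTop := by
    apply Filter.tendsto_atTop_add_const_left
    exact tendsto_neg_atBot_atTop.comp hlog
  apply tendsto_atTop_mono' _ _ hneg
  apply eventually_nhdsWithin_of_forall
  intro r hr
  have h1 := K_ge_log hr
  have h2 : Real.log (π/2) ≤ Real.log (Real.sqrt (1 - r^2) + π/2) := by
    apply Real.log_le_log (by positivity)
    linarith [(sqrt_one_sub_mem hr).1]
  linarith

lemma sqrt_mul_K_tendsto : Tendsto (fun r : ℝ => Real.sqrt (1 - r^2) * K r)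
    (𝓝[Ioo (0:ℝ) 1] 1) (𝓝 0) := by
  have hxlog : Tendsto (fun x : ℝ => Real.log x * x) (𝓝[Ioi (0:ℝ)] 0) (𝓝 0) := by
    have h := tendsto_log_mul_rpow_nhdsGT_zero (one_pos)
    simpa using h
  have hmul : Tendsto (fun r : ℝ => Real.log (Real.sqrt (1 - r^2)) * Real.sqrt (1 - r^2))
      (𝓝[Ioo (0:ℝ) 1] 1) (𝓝 0) := hxlog.comp sqrt_tendsto_one
  have hinv : Tendsto (fun r : ℝ => 1/(1 - Real.sqrt (1 - r^2))) (𝓝[Ioo (0:ℝ) 1] 1)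
      (𝓝 1) := by
    have h0 : Tendsto (fun r : ℝ => Real.sqrt (1 - r^2)) (𝓝[Ioo (0:ℝ) 1] 1) (𝓝 0) :=
      sqrt_tendsto_one.mono_right nhdsWithin_le_nhds
    have h1 : Tendsto (fun r : ℝ => 1 - Real.sqrt (1 - r^2)) (𝓝[Ioo (0:ℝ) 1] 1) (𝓝 1) := by
      have h1' := (tendsto_const_nhds (x := (1:ℝ)) (f := 𝓝[Ioo (0:ℝ) 1] (1:ℝ))).sub h0
      norm_num at h1'
      rwa [nhdsWithin_Ioo_eq_nhdsLT (by norm_num : (0:ℝ) < 1)]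
    have := h1.inv₀ (by norm_num)
    simpa [one_div] using this
  have hup : Tendsto (fun r : ℝ => Real.sqrt 2 * (π/2) *
      (-(Real.log (Real.sqrt (1 - r^2)) * Real.sqrt (1 - r^2))) * (1/(1 - Real.sqrt (1 - r^2))))
      (𝓝[Ioo (0:ℝ) 1] 1) (𝓝 0) := by
    have h2' := ((tendsto_const_nhds (x := Real.sqrt 2 * (π/2))
      (f := 𝓝[Ioo (0:ℝ) 1] (1:ℝ))).mul hmul.neg).mul hinv
    norm_num at h2'
    rw [nhdsWithin_Ioo_eq_nhdsLT (by norm_num : (0:ℝ) < 1)]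
    convert h2' using 2 with r
    ring
  apply tendsto_of_tendsto_of_tendsto_of_le_of_le' tendsto_const_nhds hup
  · apply eventually_nhdsWithin_of_forall
    intro r hr
    have := K_ge (sq_lt_one_of_mem hr)
    have := Real.sqrt_nonneg (1 - r^2)
    nlinarith [Real.pi_pos]
  · apply eventually_nhdsWithin_of_forall
    intro r hr
    obtain ⟨hb0, hb1⟩ := sqrt_one_sub_mem hr
    have h1 := K_le_log hr
    have h2 := mul_le_mul_of_nonneg_left h1 hb0.le
    calc Real.sqrt (1 - r^2) * K r
        ≤ Real.sqrt (1 - r^2) * (Real.sqrt 2 * (π/2) *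
            ((-Real.log (Real.sqrt (1 - r^2))) / (1 - Real.sqrt (1 - r^2)))) := h2
      _ = Real.sqrt 2 * (π/2) *
            (-(Real.log (Real.sqrt (1 - r^2)) * Real.sqrt (1 - r^2))) *
            (1/(1 - Real.sqrt (1 - r^2))) := by ring

lemma sigma_tendsto_zero : Tendsto (fun r : ℝ => Real.sqrt (1 - r^2))
    (𝓝[Ioo (0:ℝ) 1] 0) (𝓝[Ioo (0:ℝ) 1] 1) := by
  apply tendsto_nhdsWithin_of_tendsto_nhds_of_eventually_within
  · have h := (sqrt_cont.continuousAt (x := (0:ℝ))).tendsto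
    norm_num at h
    exact h.mono_left nhdsWithin_le_nhds
  · exact eventually_nhdsWithin_of_forall fun r hr => sqrt_one_sub_mem hr

lemma sigma_tendsto_one : Tendsto (fun r : ℝ => Real.sqrt (1 - r^2))
    (𝓝[Ioo (0:ℝ) 1] 1) (𝓝[Ioo (0:ℝ) 1] 0) := by
  apply tendsto_nhdsWithin_of_tendsto_nhds_of_eventually_within
  · have h := (sqrt_cont.continuousAt (x := (1:ℝ))).tendsto
    norm_num at h
    exact h.mono_left nhdsWithin_le_nhds
  · exact eventually_nhdsWithin_of_forall fun r hr => sqrt_one_sub_mem hr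

-- derived limits at 0
lemma K'_atTop : Tendsto K' (𝓝[Ioo (0:ℝ) 1] 0) atTop :=
  K_tendsto_atTop.comp sigma_tendsto_zero

lemma E'_tendsto_zero : Tendsto E' (𝓝[Ioo (0:ℝ) 1] 0) (𝓝 1) :=
  E_tendsto_one.comp sigma_tendsto_zero

lemma rK'_tendsto_zero : Tendsto (fun r : ℝ => r * K' r) (𝓝[Ioo (0:ℝ) 1] 0) (𝓝 0) := by
  have h := sqrt_mul_K_tendsto.comp sigma_tendsto_zero
  apply h.congr'
  apply eventually_nhdsWithin_of_forall
  intro r hr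
  have h2 : Real.sqrt (1 - Real.sqrt (1 - r^2)^2) = r := by
    rw [sq_sqrt_one_sub hr]
    simp [Real.sqrt_sq hr.1.le]
  simp only [Function.comp_apply, K', h2]

-- derived limits at 1
lemma K'_tendsto_one : Tendsto K' (𝓝[Ioo (0:ℝ) 1] 1) (𝓝 (π/2)) :=
  K_tendsto_zero.comp sigma_tendsto_one

lemma E'_tendsto_one : Tendsto E' (𝓝[Ioo (0:ℝ) 1] 1) (𝓝 (π/2)) :=
  E_tendsto_zero.comp sigma_tendsto_one

lemma K'_sub_E'_tendsto_one : Tendsto (fun r => K' r - E' r) (𝓝[Ioo (0:ℝ) 1] 1) (𝓝 0) := by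
  have h := K'_tendsto_one.sub E'_tendsto_one
  rw [show (π/2 - π/2 : ℝ) = 0 by ring] at h
  exact h

lemma K_pos_on {r : ℝ} (hr : r ∈ Ioo (0:ℝ) 1) : 0 < K r :=
  lt_of_lt_of_le (by positivity) (K_ge (sq_lt_one_of_mem hr))

lemma K'_ge {r : ℝ} (hr : r ∈ Ioo (0:ℝ) 1) : π/2 ≤ K' r :=
  K_ge (sq_lt_one_of_mem (sqrt_one_sub_mem hr))

lemma pim_eq {r : ℝ} : π * m r = 2 * (1 - r^2) * K r * K' r := by
  simp only [m]
  field_simp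

lemma H_tendsto_zero : Tendsto H (𝓝[Ioo (0:ℝ) 1] 0) (𝓝 0) := by
  set l := 𝓝[Ioo (0:ℝ) 1] (0:ℝ) with hl
  have hid : Tendsto (fun r : ℝ => r) l (𝓝 0) := tendsto_id.mono_right nhdsWithin_le_nhds
  have hA : Tendsto (fun r => 4 * E' r * K r - π) l (𝓝 π) := by
    have h := (((tendsto_const_nhds (x := (4:ℝ)) (f := l)).mul E'_tendsto_zero).mul
      K_tendsto_zero).sub (tendsto_const_nhds (x := π))
    rw [show (4 * 1 * (π/2) - π : ℝ) = π by ring] at h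
    exact h
  -- first factor tends to 0
  have hnum : Tendsto (fun r : ℝ => 2 * (1 - r^2) * K r) l (𝓝 π) := by
    have h1 : Tendsto (fun r : ℝ => 2 * (1 - r^2)) l (𝓝 2) := by
      have := (tendsto_const_nhds (x := (2:ℝ)) (f := l)).mul
        ((tendsto_const_nhds (x := (1:ℝ)) (f := l)).sub (hid.pow 2))
      rw [show (2 * (1 - 0^2) : ℝ) = 2 by norm_num] at this
      exact this
    have h := h1.mul K_tendsto_zero
    rw [show (2 * (π/2) : ℝ) = π by ring] at h
    exact h
  have hfrac : Tendsto (fun r => π * m r / (4 * E' r * K r - π)) l atTop := by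
    have h1 : Tendsto (fun r => 2 * (1 - r^2) * K r * K' r) l atTop :=
      hnum.pos_mul_atTop Real.pi_pos K'_atTop
    have h2 : Tendsto (fun r => (4 * E' r * K r - π)⁻¹) l (𝓝 π⁻¹) :=
      hA.inv₀ Real.pi_ne_zero
    have h3 := h1.atTop_mul_pos (by positivity : (0:ℝ) < π⁻¹) h2
    apply h3.congr
    intro r
    rw [div_eq_mul_inv, pim_eq]
  have hF1 : Tendsto (fun r => 1 / (1 + π * m r / (4 * E' r * K r - π))) l (𝓝 0) := by
    have h1 : Tendsto (fun r => 1 + π * m r / (4 * E' r * K r - π)) l atTop :=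
      tendsto_atTop_add_const_left _ 1 hfrac
    have := h1.inv_tendsto_atTop
    apply this.congr
    intro r
    simp [one_div]
  -- second factor tends to 1
  have hN1 : Tendsto (fun r => K' r * (E r - K r)) l (𝓝 0) := by
    have hlow : Tendsto (fun r : ℝ => -(4 * (r * (r * K' r)))) l (𝓝 0) := by
      have h := ((tendsto_const_nhds (x := (4:ℝ)) (f := l)).mul
        (hid.mul rK'_tendsto_zero)).neg
      rw [show -(4 * (0 * 0) : ℝ) = 0 by ring] at h
      exact h
    have hev : ∀ᶠ r in l, r ∈ Ioo (0:ℝ) 1 ∩ Iio (1/2 : ℝ) :=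
      Filter.inter_mem self_mem_nhdsWithin
        (mem_nhdsWithin_of_mem_nhds (Iio_mem_nhds (by norm_num)))
    apply tendsto_of_tendsto_of_tendsto_of_le_of_le' hlow tendsto_const_nhds
    · apply hev.mono
      intro r hr
      have hKE := K_sub_E_le (r := r)
        (by nlinarith [mul_le_mul hr.2.le hr.2.le hr.1.1.le (by norm_num : (0:ℝ) ≤ 1/2)])
      have hK' : 0 ≤ K' r := le_trans (by positivity) (K'_ge hr.1)
      nlinarith [mul_le_mul_of_nonneg_left hKE hK']
    · apply eventually_nhdsWithin_of_forall
      intro r hr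
      have hK' : 0 ≤ K' r := le_trans (by positivity) (K'_ge hr)
      have hEK : E r - K r ≤ 0 := by linarith [E_le r, K_ge (sq_lt_one_of_mem hr)]
      exact mul_nonpos_of_nonneg_of_nonpos hK' hEK
  have hN2 : Tendsto (fun r : ℝ => (r * K' r)^2 * (K r)^2) l (𝓝 0) := by
    have h := (rK'_tendsto_zero.pow 2).mul (K_tendsto_zero.pow 2)
    rw [show ((0:ℝ)^2 * (π/2)^2 : ℝ) = 0 by ring] at h
    exact h
  have hX : Tendsto (fun r => K r * K' r * (E r * E' r + r^2 * K r * K' r - K r * E' r) /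
      (4 * E' r * K r - π)^2) l (𝓝 0) := by
    have hnum2 : Tendsto (fun r => K r * E' r * (K' r * (E r - K r)) + (r * K' r)^2 * (K r)^2)
        l (𝓝 0) := by
      have h1 := (K_tendsto_zero.mul E'_tendsto_zero).mul hN1
      rw [show ((π/2) * 1 * 0 : ℝ) = 0 by ring] at h1
      have h := h1.add hN2
      rw [show ((0:ℝ) + 0 : ℝ) = 0 by ring] at h
      exact h
    have hden : Tendsto (fun r => (4 * E' r * K r - π)^2) l (𝓝 (π^2)) := hA.pow 2
    have h := hnum2.div hden (by positivity)
    rw [show ((0:ℝ) / π^2 : ℝ) = 0 by simp] at h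
    apply h.congr
    intro r
    simp only [Pi.div_apply]
    ring
  have hF2 : Tendsto (fun r => 1 + 8 * (K r * K' r * (E r * E' r + r^2 * K r * K' r - K r * E' r) /
      (4 * E' r * K r - π)^2)) l (𝓝 1) := by
    have h := (tendsto_const_nhds (x := (1:ℝ)) (f := l)).add
      ((tendsto_const_nhds (x := (8:ℝ)) (f := l)).mul hX)
    rw [show ((1:ℝ) + 8 * 0 : ℝ) = 1 by ring] at h
    exact h
  have h := hF1.mul hF2
  rw [show ((0:ℝ) * 1 : ℝ) = 0 by ring] at h
  exact h

lemma E'_ge_one {r : ℝ} (hr : r ∈ Ioo (0:ℝ) 1) : 1 ≤ E' r :=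
  E_ge_one (sq_lt_one_of_mem (sqrt_one_sub_mem hr)).le

lemma A_ge_pi {r : ℝ} (hr : r ∈ Ioo (0:ℝ) 1) : π ≤ 4 * E' r * K r - π := by
  have h1 := K_ge (sq_lt_one_of_mem hr)
  have h2 := E'_ge_one hr
  have h3 := K_pos_on hr
  nlinarith

lemma H_tendsto_one : Tendsto H (𝓝[Ioo (0:ℝ) 1] 1) (𝓝 1) := by
  set l := 𝓝[Ioo (0:ℝ) 1] (1:ℝ) with hl
  have hid : Tendsto (fun r : ℝ => r) l (𝓝 1) := tendsto_id.mono_right nhdsWithin_le_nhds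
  have hKinv : Tendsto (fun r => (K r)⁻¹) l (𝓝 0) := K_tendsto_atTop.inv_tendsto_atTop
  have hA : Tendsto (fun r => 4 * E' r * K r - π) l atTop := by
    have h1 : Tendsto (fun r => 4 * E' r) l (𝓝 (2*π)) := by
      have h := (tendsto_const_nhds (x := (4:ℝ)) (f := l)).mul E'_tendsto_one
      rw [show (4 * (π/2) : ℝ) = 2*π by ring] at h
      exact h
    have h2 := h1.pos_mul_atTop (by positivity) K_tendsto_atTop
    exact tendsto_atTop_add_const_right _ (-π) h2 |>.congr fun r => by ring
  have hAinv : Tendsto (fun r => (4 * E' r * K r - π)⁻¹) l (𝓝 0) := hA.inv_tendsto_atTop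
  -- (1 - r^2) * K r → 0
  have hbK : Tendsto (fun r : ℝ => (1 - r^2) * K r) l (𝓝 0) := by
    have h0 : Tendsto (fun r : ℝ => Real.sqrt (1 - r^2)) l (𝓝 0) :=
      sqrt_tendsto_one.mono_right nhdsWithin_le_nhds
    have h := h0.mul sqrt_mul_K_tendsto
    rw [show ((0:ℝ) * 0 : ℝ) = 0 by ring] at h
    apply h.congr'
    apply eventually_nhdsWithin_of_forall
    intro r hr
    show Real.sqrt (1 - r^2) * (Real.sqrt (1 - r^2) * K r) = (1 - r^2) * K r
    rw [← mul_assoc, Real.mul_self_sqrt (by nlinarith [hr.1, hr.2] : (0:ℝ) ≤ 1 - r^2)]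
  -- first factor → 1
  have hF1 : Tendsto (fun r => 1 / (1 + π * m r / (4 * E' r * K r - π))) l (𝓝 1) := by
    have hmA : Tendsto (fun r => π * m r / (4 * E' r * K r - π)) l (𝓝 0) := by
      have h1 : Tendsto (fun r => 2 * ((1 - r^2) * K r) * K' r) l (𝓝 0) := by
        have h := ((tendsto_const_nhds (x := (2:ℝ)) (f := l)).mul hbK).mul K'_tendsto_one
        rw [show (2 * 0 * (π/2) : ℝ) = 0 by ring] at h
        exact h
      have h := h1.mul hAinv
      rw [show ((0:ℝ) * 0 : ℝ) = 0 by ring] at h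
      apply h.congr
      intro r
      rw [div_eq_mul_inv, pim_eq]
      ring
    have h := ((tendsto_const_nhds (x := (1:ℝ)) (f := l)).add hmA)
    rw [show ((1:ℝ) + 0 : ℝ) = 1 by ring] at h
    have h2 := (tendsto_const_nhds (x := (1:ℝ)) (f := l)).div h (by norm_num)
    rw [show ((1:ℝ) / 1 : ℝ) = 1 by norm_num] at h2
    exact h2
  -- second factor → 1
  have hKdivA : Tendsto (fun r => K r / (4 * E' r * K r - π)) l (𝓝 ((2*π)⁻¹)) := by
    have h1 : Tendsto (fun r => 4 * E' r - π * (K r)⁻¹) l (𝓝 (2*π)) := by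
      have h := ((tendsto_const_nhds (x := (4:ℝ)) (f := l)).mul E'_tendsto_one).sub
        ((tendsto_const_nhds (x := π) (f := l)).mul hKinv)
      rw [show (4 * (π/2) - π * 0 : ℝ) = 2*π by ring] at h
      exact h
    have h2 := h1.inv₀ (by positivity : (2*π : ℝ) ≠ 0)
    apply h2.congr'
    apply eventually_nhdsWithin_of_forall
    intro r hr
    have hK := K_pos_on hr
    have hE' := E'_ge_one hr
    have hKge := K_ge (sq_lt_one_of_mem hr)
    have hApos := lt_of_lt_of_le Real.pi_pos (A_ge_pi hr)
    have hne : (4 * E' r - π * (K r)⁻¹) ≠ 0 := by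
      have h3 : (K r)⁻¹ ≤ (π/2)⁻¹ := inv_anti₀ (by positivity) hKge
      have h4 : π * (K r)⁻¹ ≤ π * (π/2)⁻¹ := mul_le_mul_of_nonneg_left h3 Real.pi_pos.le
      rw [show π * (π/2)⁻¹ = 2 from by field_simp] at h4
      nlinarith
    rw [eq_div_iff hApos.ne', inv_mul_eq_div, div_eq_iff hne]
    field_simp
  have hsK' : Tendsto (fun r : ℝ => (1 - r^2) * K' r) l (𝓝 0) := by
    have h1 : Tendsto (fun r : ℝ => 1 - r^2) l (𝓝 0) := by
      have h := (tendsto_const_nhds (x := (1:ℝ)) (f := l)).sub (hid.pow 2)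
      rw [show ((1:ℝ) - 1^2 : ℝ) = 0 by norm_num] at h
      exact h
    have h := h1.mul K'_tendsto_one
    rw [show ((0:ℝ) * (π/2) : ℝ) = 0 by ring] at h
    exact h
  have hB : Tendsto (fun r => E' r * E r * (K r)⁻¹ + (r^2 * K' r - E' r)) l (𝓝 0) := by
    have h1 : Tendsto (fun r => E' r * E r * (K r)⁻¹) l (𝓝 0) := by
      have h := (E'_tendsto_one.mul E_tendsto_one).mul hKinv
      rw [show ((π/2) * 1 * 0 : ℝ) = 0 by ring] at h
      exact h
    have h2 : Tendsto (fun r => r^2 * K' r - E' r) l (𝓝 0) := by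
      have h := K'_sub_E'_tendsto_one.sub hsK'
      rw [show ((0:ℝ) - 0 : ℝ) = 0 by ring] at h
      apply h.congr
      intro r
      ring
    have h := h1.add h2
    rw [show ((0:ℝ) + 0 : ℝ) = 0 by ring] at h
    exact h
  have hX : Tendsto (fun r => K r * K' r * (E r * E' r + r^2 * K r * K' r - K r * E' r) /
      (4 * E' r * K r - π)^2) l (𝓝 0) := by
    have h := (K'_tendsto_one.mul hB).mul (hKdivA.pow 2)
    rw [show ((π/2) * 0 * ((2*π)⁻¹)^2 : ℝ) = 0 by ring] at h
    apply h.congr'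
    apply eventually_nhdsWithin_of_forall
    intro r hr
    have hK := (K_pos_on hr).ne'
    have hApos := (lt_of_lt_of_le Real.pi_pos (A_ge_pi hr)).ne'
    show K' r * (E' r * E r * (K r)⁻¹ + (r^2 * K' r - E' r)) * (K r / (4 * E' r * K r - π))^2
      = K r * K' r * (E r * E' r + r^2 * K r * K' r - K r * E' r) / (4 * E' r * K r - π)^2
    field_simp
    ring
  have hF2 : Tendsto (fun r => 1 + 8 * (K r * K' r * (E r * E' r + r^2 * K r * K' r - K r * E' r) /
      (4 * E' r * K r - π)^2)) l (𝓝 1) := by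
    have h := (tendsto_const_nhds (x := (1:ℝ)) (f := l)).add
      ((tendsto_const_nhds (x := (8:ℝ)) (f := l)).mul hX)
    rw [show ((1:ℝ) + 8 * 0 : ℝ) = 1 by ring] at h
    exact h
  have h := hF1.mul hF2
  rw [show ((1:ℝ) * 1 : ℝ) = 1 by ring] at h
  exact h

lemma m_nonneg {r : ℝ} (hr : r ∈ Ioo (0:ℝ) 1) : 0 ≤ m r := by
  have h1 : 0 < K' r := lt_of_lt_of_le (by positivity) (K'_ge hr)
  have h2 : (0:ℝ) ≤ 1 - r^2 := by nlinarith [hr.1, hr.2]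
  have h3 := K_pos_on hr
  have hπ := Real.pi_pos
  simp only [m]
  apply mul_nonneg (mul_nonneg (mul_nonneg (by positivity) h2) h3.le) h1.le

lemma K'cont : ContinuousOn K' (Ioo (0:ℝ) 1) :=
  Kcont.comp sqrt_cont.continuousOn fun r hr => sqrt_one_sub_mem hr

lemma E'cont : ContinuousOn E' (Ioo (0:ℝ) 1) :=
  Econt.comp sqrt_cont.continuousOn fun r hr => sqrt_one_sub_mem hr

lemma Hcont : ContinuousOn H (Ioo (0:ℝ) 1) := by
  have hA : ContinuousOn (fun r => 4 * E' r * K r - π) (Ioo (0:ℝ) 1) :=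
    ((continuousOn_const.mul E'cont).mul Kcont).sub continuousOn_const
  have hAne : ∀ r ∈ Ioo (0:ℝ) 1, (4 * E' r * K r - π) ≠ 0 := fun r hr =>
    (lt_of_lt_of_le Real.pi_pos (A_ge_pi hr)).ne'
  have hm : ContinuousOn m (Ioo (0:ℝ) 1) := by
    have : ContinuousOn (fun r : ℝ => (2/π) * (1 - r^2) * K r * K' r) (Ioo (0:ℝ) 1) :=
      ((continuousOn_const.mul (continuousOn_const.sub ((continuous_pow 2).continuousOn))).mul
        Kcont).mul K'cont
    exact this
  have hD : ContinuousOn (fun r => 1 + π * m r / (4 * E' r * K r - π)) (Ioo (0:ℝ) 1) :=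
    continuousOn_const.add ((continuousOn_const.mul hm).div hA hAne)
  have hDne : ∀ r ∈ Ioo (0:ℝ) 1, (1 + π * m r / (4 * E' r * K r - π)) ≠ 0 := by
    intro r hr
    have h1 : 0 ≤ π * m r / (4 * E' r * K r - π) :=
      div_nonneg (mul_nonneg Real.pi_pos.le (m_nonneg hr))
        (le_of_lt (lt_of_lt_of_le Real.pi_pos (A_ge_pi hr)))
    exact (by linarith : (0:ℝ) < 1 + π * m r / (4 * E' r * K r - π)).ne'
  have hnum : ContinuousOn
      (fun r => K r * K' r * (E r * E' r + r^2 * K r * K' r - K r * E' r)) (Ioo (0:ℝ) 1) :=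
    (Kcont.mul K'cont).mul (((Econt.mul E'cont).add
      ((((continuous_pow 2).continuousOn.mul Kcont).mul K'cont))).sub (Kcont.mul E'cont))
  exact (continuousOn_const.div hD hDne).mul
    (continuousOn_const.add (continuousOn_const.mul
      (hnum.div (hA.pow 2) fun r hr => pow_ne_zero 2 (hAne r hr))))

lemma Hext_eq_H {r : ℝ} (hr : r ∈ Ioo (0:ℝ) 1) : Hext r = H r := by
  simp only [Hext, if_neg hr.1.ne', if_neg hr.2.ne]

lemma Hext_cont : ContinuousOn Hext (Icc (0:ℝ) 1) := by
  intro x hx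
  rcases eq_or_ne x 0 with rfl | hx0
  · have hset : Icc (0:ℝ) 1 ∩ Iio 1 = Ico (0:ℝ) 1 := by
      ext y
      simp only [mem_inter_iff, mem_Icc, mem_Iio, mem_Ico]
      exact ⟨fun ⟨⟨h1, _⟩, h3⟩ => ⟨h1, h3⟩, fun ⟨h1, h3⟩ => ⟨⟨h1, h3.le⟩, h3⟩⟩
    have hfe : 𝓝[Icc (0:ℝ) 1] (0:ℝ) = 𝓝[Ico (0:ℝ) 1] (0:ℝ) := by
      rw [← hset]
      exact (nhdsWithin_inter_of_mem'
        (mem_nhdsWithin_of_mem_nhds (Iio_mem_nhds zero_lt_one))).symm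
    have h0 : Hext 0 = 0 := by simp [Hext]
    unfold ContinuousWithinAt
    rw [hfe, ← Ioo_insert_left zero_lt_one, nhdsWithin_insert]
    apply Filter.Tendsto.sup
    · exact tendsto_pure_nhds Hext 0
    · rw [h0]
      apply H_tendsto_zero.congr'
      exact eventually_nhdsWithin_of_forall fun r hr => (Hext_eq_H hr).symm
  rcases eq_or_ne x 1 with rfl | hx1
  · have hset : Icc (0:ℝ) 1 ∩ Ioi 0 = Ioc (0:ℝ) 1 := by
      ext y
      simp only [mem_inter_iff, mem_Icc, mem_Ioi, mem_Ioc]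
      exact ⟨fun ⟨⟨_, h2⟩, h3⟩ => ⟨h3, h2⟩, fun ⟨h3, h2⟩ => ⟨⟨h3.le, h2⟩, h3⟩⟩
    have hfe : 𝓝[Icc (0:ℝ) 1] (1:ℝ) = 𝓝[Ioc (0:ℝ) 1] (1:ℝ) := by
      rw [← hset]
      exact (nhdsWithin_inter_of_mem'
        (mem_nhdsWithin_of_mem_nhds (Ioi_mem_nhds zero_lt_one))).symm
    have h1 : Hext 1 = 1 := by norm_num [Hext]
    unfold ContinuousWithinAt
    rw [hfe, ← Ioo_insert_right zero_lt_one, nhdsWithin_insert]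
    apply Filter.Tendsto.sup
    · exact tendsto_pure_nhds Hext 1
    · rw [h1]
      apply H_tendsto_one.congr'
      exact eventually_nhdsWithin_of_forall fun r hr => (Hext_eq_H hr).symm
  · have hxm : x ∈ Ioo (0:ℝ) 1 :=
      ⟨lt_of_le_of_ne hx.1 (Ne.symm hx0), lt_of_le_of_ne hx.2 hx1⟩
    have hmem : Ioo (0:ℝ) 1 ∈ 𝓝 x := isOpen_Ioo.mem_nhds hxm
    have hH : ContinuousAt H x := Hcont.continuousAt hmem
    have hcong : Hext =ᶠ[𝓝 x] H :=
      Filter.eventually_of_mem hmem fun r hr => Hext_eq_H hr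
    exact (hH.congr hcong.symm).continuousWithinAt

theorem stmt_18 :
    Filter.Tendsto H (nhdsWithin 0 (Set.Ioi (0:ℝ))) (nhds 0) ∧
    Filter.Tendsto H (nhdsWithin 1 (Set.Iio (1:ℝ))) (nhds 1) ∧
    ContinuousOn Hext (Set.Icc (0:ℝ) 1) := by
  refine ⟨?_, ?_, Hext_cont⟩
  · rw [← nhdsWithin_Ioo_eq_nhdsGT zero_lt_one]
    exact H_tendsto_zero
  · rw [← nhdsWithin_Ioo_eq_nhdsLT zero_lt_one]
    exact H_tendsto_one
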